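/- There exist positive real parameters k_1, k_2, k_3, k_4, k_8, A, B and ε_0 > 0 such that for every ε ∈ (0, ε_0), the planar system y' = k_1(A−B+f−y)^2 − k_2 f y + k_3(B−f) + k_8(A−B+f−y)y, f' = ε^{-1}(−k_2 f y + (k_3+k_4)(B−f)) has three distinct steady states in the region Ω = {(y,f) : y > 0, 0 < f < B, A − B + f − y > 0}; at two of these the Jacobian matrix of the right-hand side has negative trace and positive determinant (so they are hyperbolic and asymptotically stable), and at the third the Jacobian has negative determinant (so it is a hyperbolic saddle). -/

import Mathlib

lemma L1' (f y : ℝ) :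
    deriv (fun s => 1*(8 - 5 + f - s)^2 - 100*f*s + 1*(5 - f) + 16*(8 - 5 + f - s)*s) y
      = 42 - 86*f - 30*y := by
  have h0 : HasDerivAt (fun s : ℝ => 8 - 5 + f - s) (-1) y := by
    simpa using (hasDerivAt_id y).const_sub (8 - 5 + f)
  have H : HasDerivAt
      (fun s => 1*(8 - 5 + f - s)^2 - 100*f*s + 1*(5 - f) + 16*(8 - 5 + f - s)*s)
      (1*((2:ℕ)*(8 - 5 + f - y)^(2-1)*(-1)) - 100*f*1 + 0 + ((16*(-1))*y + (16*(8 - 5 + f - y))*1)) y :=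
    ((((h0.pow 2).const_mul 1).sub ((hasDerivAt_id y).const_mul (100*f))).add
      (hasDerivAt_const y (1*(5 - f)))).add ((h0.const_mul 16).mul (hasDerivAt_id y))
  rw [H.deriv]; push_cast; ring

lemma L2' (f y : ℝ) :
    deriv (fun s => 1*(8 - 5 + s - y)^2 - 100*s*y + 1*(5 - s) + 16*(8 - 5 + s - y)*y) f
      = 5 + 2*f - 86*y := by
  have h0 : HasDerivAt (fun s : ℝ => 8 - 5 + s - y) 1 f := by
    simpa using ((hasDerivAt_id f).const_add (8 - 5)).sub_const y
  have H : HasDerivAt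
      (fun s => 1*(8 - 5 + s - y)^2 - 100*s*y + 1*(5 - s) + 16*(8 - 5 + s - y)*y)
      (1*((2:ℕ)*(8 - 5 + f - y)^(2-1)*1) - (100*1)*y + 1*(0 - 1) + (16*1)*y) f :=
    ((((h0.pow 2).const_mul 1).sub (((hasDerivAt_id f).const_mul 100).mul_const y)).add
      (((hasDerivAt_const f 5).sub (hasDerivAt_id f)).const_mul 1)).add
      ((h0.const_mul 16).mul_const y)
  rw [H.deriv]; push_cast; ring

lemma L3' (ε f y : ℝ) :
    deriv (fun s => ε⁻¹ * (-(100*f*s) + (1 + 10)*(5 - f))) y = ε⁻¹ * (-(100*f)) := by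
  have H : HasDerivAt (fun s => ε⁻¹ * (-(100*f*s) + (1 + 10)*(5 - f)))
      (ε⁻¹ * (-(100*f*1) + 0)) y :=
    ((((hasDerivAt_id y).const_mul (100*f)).neg).add
      (hasDerivAt_const y ((1 + 10)*(5 - f)))).const_mul ε⁻¹
  rw [H.deriv]; ring

lemma L4' (ε f y : ℝ) :
    deriv (fun s => ε⁻¹ * (-(100*s*y) + (1 + 10)*(5 - s))) f = ε⁻¹ * (-(100*y) - 11) := by
  have H : HasDerivAt (fun s => ε⁻¹ * (-(100*s*y) + (1 + 10)*(5 - s)))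
      (ε⁻¹ * (-(100*1*y) + (1 + 10)*(0 - 1))) f :=
    (((((hasDerivAt_id f).const_mul 100).mul_const y).neg).add
      (((hasDerivAt_const f 5).sub (hasDerivAt_id f)).const_mul (1 + 10))).const_mul ε⁻¹
  rw [H.deriv]; ring

lemma stablePt' (ε y f : ℝ) (hε : 0 < ε) (hy : 0 < y) (hy3 : y < 3)
    (hfdef : f * (11 + 100*y) = 55)
    (hQ : 7744 + 11352*y - 242415*y^2 + 387000*y^3 - 150000*y^4 = 0)
    (ha : 42 - 86*f - 30*y < 0)
    (hPD : 0 < 30000000*y^4 - 32100000*y^3 - 12771000*y^2 + 6468330*y + 1423928) :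
    (0 < y ∧ 0 < f ∧ f < 5 ∧ 0 < 8 - 5 + f - y) ∧
    (1*(8 - 5 + f - y)^2 - 100*f*y + 1*(5 - f) + 16*(8 - 5 + f - y)*y = 0) ∧
    (ε⁻¹ * (-(100*f*y) + (1 + 10)*(5 - f)) = 0) ∧
    (deriv (fun s => 1*(8 - 5 + f - s)^2 - 100*f*s + 1*(5 - f) + 16*(8 - 5 + f - s)*s) y
      + deriv (fun s => ε⁻¹ * (-(100*s*y) + (1 + 10)*(5 - s))) f < 0) ∧
    (0 < deriv (fun s => 1*(8 - 5 + f - s)^2 - 100*f*s + 1*(5 - f) + 16*(8 - 5 + f - s)*s) y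
        * deriv (fun s => ε⁻¹ * (-(100*s*y) + (1 + 10)*(5 - s))) f
      - deriv (fun s => 1*(8 - 5 + s - y)^2 - 100*s*y + 1*(5 - s) + 16*(8 - 5 + s - y)*y) f
        * deriv (fun s => ε⁻¹ * (-(100*f*s) + (1 + 10)*(5 - f))) y) := by
  have hb : (0:ℝ) < 11 + 100*y := by linarith
  have hfe : f = 55 / (11 + 100*y) := by
    field_simp
    linarith [hfdef]
  have hfpos : 0 < f := by rw [hfe]; exact div_pos (by norm_num) hb
  have hflt : f < 5 := by nlinarith [hfdef]
  have hinv : 0 < ε⁻¹ := inv_pos.mpr hε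
  refine ⟨⟨hy, hfpos, hflt, by linarith⟩, ?_, ?_, ?_, ?_⟩
  · -- V1 = 0
    have key : (1*(8 - 5 + f - y)^2 - 100*f*y + 1*(5 - f) + 16*(8 - 5 + f - y)*y)
        * (11 + 100*y)^2
        = (7744 + 11352*y - 242415*y^2 + 387000*y^3 - 150000*y^4)
          + (11*f + 100*y*f + 110 - 446*y - 8600*y^2) * (f*(11 + 100*y) - 55) := by ring
    have h0 : f*(11 + 100*y) - 55 = 0 := by linarith [hfdef]
    rw [h0, mul_zero, add_zero, hQ] at key
    have hne : (11 + 100*y)^2 ≠ 0 := by positivity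
    exact (mul_eq_zero.mp key).resolve_right hne
  · -- V2 = 0
    have : -(100*f*y) + (1 + 10)*(5 - f) = 0 := by linarith [hfdef]
    rw [this, mul_zero]
  · -- trace
    rw [L1', L4']
    have h2 : ε⁻¹ * (-(100*y) - 11) < 0 :=
      mul_neg_of_pos_of_neg hinv (by linarith)
    linarith
  · -- det
    rw [L1', L2', L3', L4']
    have key : (-(42 - 86*f - 30*y)*(100*y + 11) + (5 + 2*f - 86*y)*(100*f))
        * (11 + 100*y)^2
        = (30000000*y^4 - 32100000*y^3 - 12771000*y^2 + 6468330*y + 1423928)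
          + (2200*f + 20000*y*f + 26906 + 144600*y) * (f*(11 + 100*y) - 55) := by ring
    have h0 : f*(11 + 100*y) - 55 = 0 := by linarith [hfdef]
    rw [h0, mul_zero, add_zero] at key
    have hS : (0:ℝ) < (11 + 100*y)^2 := by positivity
    have hD : 0 < -(42 - 86*f - 30*y)*(100*y + 11) + (5 + 2*f - 86*y)*(100*f) := by
      by_contra h
      push_neg at h
      nlinarith [mul_nonpos_of_nonpos_of_nonneg h hS.le]
    have hrw : (42 - 86*f - 30*y) * (ε⁻¹ * (-(100*y) - 11))
        - (5 + 2*f - 86*y) * (ε⁻¹ * (-(100*f)))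
        = ε⁻¹ * (-(42 - 86*f - 30*y)*(100*y + 11) + (5 + 2*f - 86*y)*(100*f)) := by ring
    rw [hrw]
    exact mul_pos hinv hD

lemma saddlePt' (ε y f : ℝ) (hε : 0 < ε) (hy : 0 < y) (hy3 : y < 3)
    (hfdef : f * (11 + 100*y) = 55)
    (hQ : 7744 + 11352*y - 242415*y^2 + 387000*y^3 - 150000*y^4 = 0)
    (hPD : 30000000*y^4 - 32100000*y^3 - 12771000*y^2 + 6468330*y + 1423928 < 0) :
    (0 < y ∧ 0 < f ∧ f < 5 ∧ 0 < 8 - 5 + f - y) ∧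
    (1*(8 - 5 + f - y)^2 - 100*f*y + 1*(5 - f) + 16*(8 - 5 + f - y)*y = 0) ∧
    (ε⁻¹ * (-(100*f*y) + (1 + 10)*(5 - f)) = 0) ∧
    (deriv (fun s => 1*(8 - 5 + f - s)^2 - 100*f*s + 1*(5 - f) + 16*(8 - 5 + f - s)*s) y
        * deriv (fun s => ε⁻¹ * (-(100*s*y) + (1 + 10)*(5 - s))) f
      - deriv (fun s => 1*(8 - 5 + s - y)^2 - 100*s*y + 1*(5 - s) + 16*(8 - 5 + s - y)*y) f
        * deriv (fun s => ε⁻¹ * (-(100*f*s) + (1 + 10)*(5 - f))) y < 0) := by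
  have hb : (0:ℝ) < 11 + 100*y := by linarith
  have hfpos : 0 < f := by nlinarith [hfdef]
  have hflt : f < 5 := by nlinarith [hfdef]
  have hinv : 0 < ε⁻¹ := inv_pos.mpr hε
  refine ⟨⟨hy, hfpos, hflt, by linarith⟩, ?_, ?_, ?_⟩
  · have key : (1*(8 - 5 + f - y)^2 - 100*f*y + 1*(5 - f) + 16*(8 - 5 + f - y)*y)
        * (11 + 100*y)^2
        = (7744 + 11352*y - 242415*y^2 + 387000*y^3 - 150000*y^4)
          + (11*f + 100*y*f + 110 - 446*y - 8600*y^2) * (f*(11 + 100*y) - 55) := by ring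
    have h0 : f*(11 + 100*y) - 55 = 0 := by linarith [hfdef]
    rw [h0, mul_zero, add_zero, hQ] at key
    have hne : (11 + 100*y)^2 ≠ 0 := by positivity
    exact (mul_eq_zero.mp key).resolve_right hne
  · have : -(100*f*y) + (1 + 10)*(5 - f) = 0 := by linarith [hfdef]
    rw [this, mul_zero]
  · rw [L1', L2', L3', L4']
    have key : (-(42 - 86*f - 30*y)*(100*y + 11) + (5 + 2*f - 86*y)*(100*f))
        * (11 + 100*y)^2
        = (30000000*y^4 - 32100000*y^3 - 12771000*y^2 + 6468330*y + 1423928)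
          + (2200*f + 20000*y*f + 26906 + 144600*y) * (f*(11 + 100*y) - 55) := by ring
    have h0 : f*(11 + 100*y) - 55 = 0 := by linarith [hfdef]
    rw [h0, mul_zero, add_zero] at key
    have hS : (0:ℝ) < (11 + 100*y)^2 := by positivity
    have hD : -(42 - 86*f - 30*y)*(100*y + 11) + (5 + 2*f - 86*y)*(100*f) < 0 := by
      by_contra h
      push_neg at h
      nlinarith [mul_nonneg h hS.le]
    have hrw : (42 - 86*f - 30*y) * (ε⁻¹ * (-(100*y) - 11))
        - (5 + 2*f - 86*y) * (ε⁻¹ * (-(100*f)))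
        = ε⁻¹ * (-(42 - 86*f - 30*y)*(100*y + 11) + (5 + 2*f - 86*y)*(100*f)) := by ring
    rw [hrw]
    exact mul_neg_of_pos_of_neg hinv hD

set_option maxHeartbeats 1000000




/-- **Theorem 3 (steady states).** There are positive parameter values and `ε₀ > 0` such that
for all `0 < ε < ε₀` the planar system
`y' = k₁(A−B+f−y)² − k₂ f y + k₃(B−f) + k₈(A−B+f−y) y`,
`f' = ε⁻¹(−k₂ f y + (k₃+k₄)(B−f))`
has three distinct steady states in `Ω = {(y,f) : y > 0, 0 < f < B, A − B + f − y > 0}`: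
two with Jacobian of negative trace and positive determinant (hyperbolic, asymptotically
stable) and one with Jacobian of negative determinant (hyperbolic saddle). -/
theorem planar_system_three_steady_states :
    ∃ k1 k2 k3 k4 k8 A B ε0 : ℝ,
      0 < k1 ∧ 0 < k2 ∧ 0 < k3 ∧ 0 < k4 ∧ 0 < k8 ∧ 0 < A ∧ 0 < B ∧ 0 < ε0 ∧
      ∀ ε ∈ Set.Ioo (0 : ℝ) ε0,
        (fun (V1 V2 : ℝ → ℝ → ℝ) =>
          (fun (tr det : ℝ → ℝ → ℝ) =>
            ∃ p1 p2 p3 : ℝ × ℝ,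
              p1 ≠ p2 ∧ p1 ≠ p3 ∧ p2 ≠ p3 ∧
              (p1 ∈ {p : ℝ × ℝ | 0 < p.1 ∧ 0 < p.2 ∧ p.2 < B ∧ 0 < A - B + p.2 - p.1}) ∧
              (p2 ∈ {p : ℝ × ℝ | 0 < p.1 ∧ 0 < p.2 ∧ p.2 < B ∧ 0 < A - B + p.2 - p.1}) ∧
              (p3 ∈ {p : ℝ × ℝ | 0 < p.1 ∧ 0 < p.2 ∧ p.2 < B ∧ 0 < A - B + p.2 - p.1}) ∧
              V1 p1.1 p1.2 = 0 ∧ V2 p1.1 p1.2 = 0 ∧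
              V1 p2.1 p2.2 = 0 ∧ V2 p2.1 p2.2 = 0 ∧
              V1 p3.1 p3.2 = 0 ∧ V2 p3.1 p3.2 = 0 ∧
              tr p1.1 p1.2 < 0 ∧ 0 < det p1.1 p1.2 ∧
              tr p2.1 p2.2 < 0 ∧ 0 < det p2.1 p2.2 ∧
              det p3.1 p3.2 < 0)
          (fun y f => deriv (fun s => V1 s f) y + deriv (fun s => V2 y s) f)
          (fun y f => deriv (fun s => V1 s f) y * deriv (fun s => V2 y s) f
            - deriv (fun s => V1 y s) f * deriv (fun s => V2 s f) y))
        (fun y f => k1 * (A - B + f - y) ^ 2 - k2 * f * y + k3 * (B - f)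
          + k8 * (A - B + f - y) * y)
        (fun y f => ε⁻¹ * (-(k2 * f * y) + (k3 + k4) * (B - f))) := by
  refine ⟨1, 100, 1, 10, 16, 8, 5, 1, by norm_num, by norm_num, by norm_num, by norm_num,
    by norm_num, by norm_num, by norm_num, by norm_num, ?_⟩
  intro ε hε
  obtain ⟨hε0, -⟩ := hε
  beta_reduce
  have hQc : Continuous fun y : ℝ =>
      7744 + 11352*y - 242415*y^2 + 387000*y^3 - 150000*y^4 := by fun_prop
  -- root 1 in [1/4, 3/10]
  obtain ⟨y1, hy1mem, hQ1⟩ := intermediate_value_Icc' (by norm_num : (1/4:ℝ) ≤ 3/10)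
    hQc.continuousOn (show (0:ℝ) ∈ Set.Icc _ _ from Set.mem_Icc.mpr ⟨by norm_num, by norm_num⟩)
  obtain ⟨hy1l, hy1u⟩ := Set.mem_Icc.mp hy1mem
  -- root 2 in [4/5, 17/20]
  obtain ⟨y2, hy2mem, hQ2⟩ := intermediate_value_Icc (by norm_num : (4/5:ℝ) ≤ 17/20)
    hQc.continuousOn (show (0:ℝ) ∈ Set.Icc _ _ from Set.mem_Icc.mpr ⟨by norm_num, by norm_num⟩)
  obtain ⟨hy2l, hy2u⟩ := Set.mem_Icc.mp hy2mem
  -- root 3 in [8/5, 17/10]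
  obtain ⟨y3, hy3mem, hQ3⟩ := intermediate_value_Icc' (by norm_num : (8/5:ℝ) ≤ 17/10)
    hQc.continuousOn (show (0:ℝ) ∈ Set.Icc _ _ from Set.mem_Icc.mpr ⟨by norm_num, by norm_num⟩)
  obtain ⟨hy3l, hy3u⟩ := Set.mem_Icc.mp hy3mem
  have hb1 : (0:ℝ) < 11 + 100*y1 := by linarith
  have hb2 : (0:ℝ) < 11 + 100*y2 := by linarith
  have hb3 : (0:ℝ) < 11 + 100*y3 := by linarith
  set f1 : ℝ := 55 / (11 + 100*y1) with hf1def
  set f2 : ℝ := 55 / (11 + 100*y2) with hf2def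
  set f3 : ℝ := 55 / (11 + 100*y3) with hf3def
  have hf1 : f1 * (11 + 100*y1) = 55 := div_mul_cancel₀ 55 hb1.ne'
  have hf2 : f2 * (11 + 100*y2) = 55 := div_mul_cancel₀ 55 hb2.ne'
  have hf3 : f3 * (11 + 100*y3) = 55 := div_mul_cancel₀ 55 hb3.ne'
  have hf1pos : 0 < f1 := div_pos (by norm_num) hb1
  -- a11 < 0 at root 1
  have ha1 : 42 - 86*f1 - 30*y1 < 0 := by
    nlinarith [hf1, mul_nonneg hf1pos.le (show (0:ℝ) ≤ 30 - 100*y1 by linarith)]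
  have ha3 : 42 - 86*f3 - 30*y3 < 0 := by
    have hf3pos : 0 < f3 := div_pos (by norm_num) hb3
    linarith
  -- PD signs
  have h1a : (0:ℝ) ≤ y1 - 1/4 := by linarith
  have h1b : (0:ℝ) ≤ 3/10 - y1 := by linarith
  have hPD1 : 0 < 30000000*y1^4 - 32100000*y1^3 - 12771000*y1^2 + 6468330*y1 + 1423928 := by
    nlinarith [mul_nonneg h1a h1b, mul_nonneg (mul_nonneg h1a h1a) h1b,
      mul_nonneg (mul_nonneg h1a h1b) h1b, sq_nonneg (y1 - 1/4), sq_nonneg (3/10 - y1)]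
  have h2a : (0:ℝ) ≤ y2 - 4/5 := by linarith
  have h2b : (0:ℝ) ≤ 17/20 - y2 := by linarith
  have hPD2 : 30000000*y2^4 - 32100000*y2^3 - 12771000*y2^2 + 6468330*y2 + 1423928 < 0 := by
    nlinarith [mul_nonneg h2a h2b, mul_nonneg (mul_nonneg h2a h2a) h2b,
      mul_nonneg (mul_nonneg h2a h2b) h2b, sq_nonneg (y2 - 4/5), sq_nonneg (17/20 - y2)]
  have h3a : (0:ℝ) ≤ y3 - 8/5 := by linarith
  have h3b : (0:ℝ) ≤ 17/10 - y3 := by linarith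
  have hPD3 : 0 < 30000000*y3^4 - 32100000*y3^3 - 12771000*y3^2 + 6468330*y3 + 1423928 := by
    nlinarith [mul_nonneg h3a h3b, mul_nonneg (mul_nonneg h3a h3a) h3b,
      mul_nonneg (mul_nonneg h3a h3b) h3b, sq_nonneg (y3 - 8/5), sq_nonneg (17/10 - y3)]
  have S1 := stablePt' ε y1 f1 hε0 (by linarith) (by linarith) hf1 hQ1 ha1 hPD1
  have S3 := stablePt' ε y3 f3 hε0 (by linarith) (by linarith) hf3 hQ3 ha3 hPD3
  have S2 := saddlePt' ε y2 f2 hε0 (by linarith) (by linarith) hf2 hQ2 hPD2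
  refine ⟨(y1, f1), (y3, f3), (y2, f2), ?_, ?_, ?_,
    S1.1, S3.1, S2.1, S1.2.1, S1.2.2.1, S3.2.1, S3.2.2.1, S2.2.1, S2.2.2.1,
    S1.2.2.2.1, S1.2.2.2.2, S3.2.2.2.1, S3.2.2.2.2, S2.2.2.2⟩
  · intro h
    have := congrArg Prod.fst h
    simp only [] at this
    linarith
  · intro h
    have := congrArg Prod.fst h
    simp only [] at this
    linarith
  · intro h
    have := congrArg Prod.fst h
    simp only [] at this
    linarith
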